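/- For all α > 0, σ ∈ (0,1), c > −σ, and every natural number n ≥ 1, the integral over (0,1) of μ · (1−μ)^(n−1) · f(μ) dμ equals α · Γ(1+c) · Γ(n+c+σ−1) / (Γ(n+c) · Γ(c+σ)), where f is the stable beta Lévy density. (This is the expected rate at which the n-th clique of the stable-beta Indian buffet process introduces new vertices.) -/

import Mathlib

open Real MeasureTheory

/-- The stable beta Lévy density with parameters α, σ, c. -/
noncomputable def stableBetaDensity (α σ c : ℝ) (μ : ℝ) : ℝ :=
  α * Real.Gamma (1 + c) / (Real.Gamma (1 - σ) * Real.Gamma (c + σ)) *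
    μ ^ (-σ - 1) * (1 - μ) ^ (c + σ - 1)

lemma real_betaIntegral {a b : ℝ} (ha : 0 < a) (hb : 0 < b) :
    ∫ x in Set.Ioo (0 : ℝ) 1, x ^ (a - 1) * (1 - x) ^ (b - 1)
      = Real.Gamma a * Real.Gamma b / Real.Gamma (a + b) := by
  have hab : (0 : ℝ) < a + b := by linarith
  have hΓ : Real.Gamma (a + b) ≠ 0 := (Real.Gamma_pos_of_pos hab).ne'
  have key := Complex.Gamma_mul_Gamma_eq_betaIntegral (s := (a : ℂ)) (t := (b : ℂ))
    (by simpa using ha) (by simpa using hb)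
  have hbeta : Complex.betaIntegral a b
      = ((∫ x in Set.Ioo (0 : ℝ) 1, x ^ (a - 1) * (1 - x) ^ (b - 1) : ℝ) : ℂ) := by
    rw [Complex.betaIntegral, intervalIntegral.integral_of_le zero_le_one,
      MeasureTheory.integral_Ioc_eq_integral_Ioo]
    have hcongr : ∀ x ∈ Set.Ioo (0:ℝ) 1,
        (x : ℂ) ^ ((a : ℂ) - 1) * ((1 : ℂ) - x) ^ ((b : ℂ) - 1)
          = ((x ^ (a - 1) * (1 - x) ^ (b - 1) : ℝ) : ℂ) := by
      intro x hx
      rw [show ((a : ℂ) - 1) = ((a - 1 : ℝ) : ℂ) by push_cast; ring,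
        show ((b : ℂ) - 1) = ((b - 1 : ℝ) : ℂ) by push_cast; ring,
        show ((1 : ℂ) - (x : ℂ)) = ((1 - x : ℝ) : ℂ) by push_cast; ring,
        ← Complex.ofReal_cpow hx.1.le,
        ← Complex.ofReal_cpow (by linarith [hx.2] : (0:ℝ) ≤ 1 - x),
        ← Complex.ofReal_mul]
    rw [setIntegral_congr_fun measurableSet_Ioo hcongr]
    exact integral_ofReal
  rw [hbeta, ← Complex.ofReal_add, Complex.Gamma_ofReal, Complex.Gamma_ofReal, Complex.Gamma_ofReal,
    ← Complex.ofReal_mul, ← Complex.ofReal_mul] at key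
  have := Complex.ofReal_inj.mp key
  field_simp
  linarith [this]

/-- The expected rate at which the n-th clique introduces new
vertices: `∫_{(0,1)} μ·(1−μ)^(n−1) · f(μ) dμ = α·Γ(1+c)·Γ(n+c+σ−1)/(Γ(n+c)·Γ(c+σ))`. -/
theorem integral_newVertexRate_stableBetaDensity (α σ c : ℝ) (n : ℕ)
    (hα : 0 < α) (hσ : σ ∈ Set.Ioo (0 : ℝ) 1) (hc : -σ < c) (hn : 1 ≤ n) :
    ∫ μ in Set.Ioo (0 : ℝ) 1, μ * (1 - μ) ^ (n - 1) * stableBetaDensity α σ c μ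
      = α * Real.Gamma (1 + c) * Real.Gamma ((n : ℝ) + c + σ - 1)
          / (Real.Gamma ((n : ℝ) + c) * Real.Gamma (c + σ)) := by
  obtain ⟨hσ0, hσ1⟩ := hσ
  set K : ℝ := α * Real.Gamma (1 + c) / (Real.Gamma (1 - σ) * Real.Gamma (c + σ)) with hK
  have ha : (0 : ℝ) < 1 - σ := by linarith
  have hb : (0 : ℝ) < (n : ℝ) + c + σ - 1 := by
    have : (1 : ℝ) ≤ (n : ℝ) := by exact_mod_cast hn
    linarith
  have hstep : ∀ μ ∈ Set.Ioo (0 : ℝ) 1,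
      μ * (1 - μ) ^ (n - 1) * stableBetaDensity α σ c μ
        = K * (μ ^ ((1 - σ) - 1) * (1 - μ) ^ (((n : ℝ) + c + σ - 1) - 1)) := by
    intro μ hμ
    have hμ0 : 0 < μ := hμ.1
    have hμ1 : 0 < 1 - μ := by linarith [hμ.2]
    have e1 : μ * μ ^ (-σ - 1) = μ ^ ((1 - σ) - 1) := by
      rw [show (1 - σ) - 1 = 1 + (-σ - 1) by ring, Real.rpow_add hμ0, Real.rpow_one]
    have e2 : (1 - μ) ^ (n - 1) * (1 - μ) ^ (c + σ - 1)
        = (1 - μ) ^ (((n : ℝ) + c + σ - 1) - 1) := by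
      rw [← Real.rpow_natCast (1 - μ) (n - 1), ← Real.rpow_add hμ1]
      congr 1
      rw [Nat.cast_sub hn]
      push_cast; ring
    rw [stableBetaDensity, ← hK]
    calc μ * (1 - μ) ^ (n - 1) * (K * μ ^ (-σ - 1) * (1 - μ) ^ (c + σ - 1))
        = K * ((μ * μ ^ (-σ - 1)) * ((1 - μ) ^ (n - 1) * (1 - μ) ^ (c + σ - 1))) := by ring
      _ = _ := by rw [e1, e2]
  rw [setIntegral_congr_fun measurableSet_Ioo hstep, MeasureTheory.integral_const_mul,
    real_betaIntegral ha hb]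
  have hsum : (1 - σ) + ((n : ℝ) + c + σ - 1) = (n : ℝ) + c := by ring
  rw [hsum, hK]
  have h1 : Real.Gamma (1 - σ) ≠ 0 := (Real.Gamma_pos_of_pos ha).ne'
  have h2 : Real.Gamma (c + σ) ≠ 0 := (Real.Gamma_pos_of_pos (by linarith)).ne'
  have h3 : Real.Gamma ((n : ℝ) + c) ≠ 0 :=
    (Real.Gamma_pos_of_pos (by linarith)).ne'
  field_simp
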